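/- Let N ≥ 1 and let f : [0,N] → [0,N] be a strictly convex function. Then the number of integer points on the graph of f, i.e. |{(x, f(x)) : x ∈ [0,N]} ∩ ℤ²|, is O(N^{2/3}) with an absolute implied constant. -/

import Mathlib

open Set

/-- Auxiliary counting lemma: if `v : ℕ → ℤ × ℤ` is injective on `range n`, each `v i`
has first coordinate `≥ 1`, and the total "size" `∑ (v i).1 + |(v i).2|` is at most `3*M`,
then `n` is small. -/
theorem jarnik_count (n : ℕ) (M : ℤ) (hn : 99 ≤ n) (v : ℕ → ℤ × ℤ)
    (hvinj : ∀ i < n, ∀ j < n, v i = v j → i = j)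
    (hv1 : ∀ i < n, 1 ≤ (v i).1)
    (htot : ∑ i ∈ Finset.range n, ((v i).1 + |(v i).2|) ≤ 3 * M) :
    ((n : ℝ)) ^ (3:ℕ) ≤ 225 * (M : ℝ) ^ (2:ℕ) := by
  set T := Nat.sqrt (n / 6) with hTdef
  set B := (Finset.range n).filter (fun i => (v i).1 + |(v i).2| ≤ (T:ℤ)) with hBdef
  have hT1 : 1 ≤ T := by
    rw [hTdef]
    exact Nat.le_sqrt.2 (by omega)
  have hTT : T * T ≤ n / 6 := Nat.sqrt_le _
  have hTT' : n / 6 < (T + 1) * (T + 1) := Nat.lt_succ_sqrt _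
  -- B injects into a box of integer points
  have hBcard : B.card ≤ 3 * (T * T) := by
    have hle : B.card ≤ (Finset.Icc (1:ℤ) (T:ℤ) ×ˢ Finset.Icc (-(T:ℤ)) (T:ℤ)).card := by
      apply Finset.card_le_card_of_injOn v
      · intro i hi
        rw [hBdef, Finset.mem_coe, Finset.mem_filter, Finset.mem_range] at hi
        obtain ⟨hin, hvi⟩ := hi
        have h1 := hv1 i hin
        have h2 : |(v i).2| ≤ (T:ℤ) := by
          have := abs_nonneg (v i).2
          omega
        rw [Finset.mem_coe, Finset.mem_product, Finset.mem_Icc, Finset.mem_Icc]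
        have h3 := abs_nonneg (v i).2
        rw [abs_le] at h2
        refine ⟨⟨h1, by omega⟩, h2⟩
      · intro i hi j hj hij
        rw [Finset.mem_coe, hBdef, Finset.mem_filter, Finset.mem_range] at hi hj
        exact hvinj i hi.1 j hj.1 hij
    have hcardbox : (Finset.Icc (1:ℤ) (T:ℤ) ×ˢ Finset.Icc (-(T:ℤ)) (T:ℤ)).card
        = T * (2 * T + 1) := by
      rw [Finset.card_product, Int.card_Icc, Int.card_Icc]
      have e1 : ((T:ℤ) + 1 - 1).toNat = T := by omega
      have e2 : ((T:ℤ) + 1 - -(T:ℤ)).toNat = 2 * T + 1 := by omega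
      rw [e1, e2]
    rw [hcardbox] at hle
    calc B.card ≤ T * (2 * T + 1) := hle
    _ ≤ 3 * (T * T) := by nlinarith
  have hBn : B ⊆ Finset.range n := Finset.filter_subset _ _
  have hBn' : B.card ≤ n / 2 := by
    have := hBcard
    omega
  -- lower bound the total size
  have hcount : ((n - B.card : ℕ) : ℤ) * ((T:ℤ) + 1) ≤ 3 * M := by
    have hsd : ∀ i ∈ Finset.range n \ B, (T:ℤ) + 1 ≤ (v i).1 + |(v i).2| := by
      intro i hi
      rw [Finset.mem_sdiff, hBdef, Finset.mem_filter] at hi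
      have : ¬ ((v i).1 + |(v i).2| ≤ (T:ℤ)) := fun h => hi.2 ⟨hi.1, h⟩
      omega
    calc ((n - B.card : ℕ) : ℤ) * ((T:ℤ) + 1)
        = (Finset.range n \ B).card • ((T:ℤ) + 1) := by
          rw [Finset.card_sdiff_of_subset hBn, Finset.card_range, nsmul_eq_mul]
    _ ≤ ∑ i ∈ Finset.range n \ B, ((v i).1 + |(v i).2|) :=
          Finset.card_nsmul_le_sum _ _ _ hsd
    _ ≤ ∑ i ∈ Finset.range n, ((v i).1 + |(v i).2|) := by
          apply Finset.sum_le_sum_of_subset_of_nonneg (Finset.sdiff_subset)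
          intro i hi _
          rw [Finset.mem_range] at hi
          have := hv1 i hi
          have := abs_nonneg (v i).2
          omega
    _ ≤ 3 * M := htot
  -- pass to the reals
  have h1 : (n:ℝ) / 2 ≤ ((n - B.card : ℕ) : ℝ) := by
    have : n ≤ 2 * (n - B.card) := by omega
    have := (Nat.cast_le (α := ℝ)).2 this
    push_cast at this
    linarith
  have h2 : (n:ℝ) / 6 ≤ ((T:ℝ) + 1) ^ 2 := by
    have : n + 1 ≤ 6 * ((T+1) * (T+1)) := by omega
    have := (Nat.cast_le (α := ℝ)).2 this
    push_cast at this
    nlinarith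
  have h3 : ((n - B.card : ℕ) : ℝ) * ((T:ℝ) + 1) ≤ 3 * (M:ℝ) := by exact_mod_cast hcount
  have hTpos : (0:ℝ) < (T:ℝ) + 1 := by positivity
  have hnn : (0:ℝ) ≤ (n:ℝ) / 2 := by positivity
  have h4 : (n:ℝ) / 2 * ((T:ℝ) + 1) ≤ 3 * (M:ℝ) := by nlinarith
  have h5 : ((n:ℝ) / 2 * ((T:ℝ) + 1)) ^ 2 ≤ (3 * (M:ℝ)) ^ 2 := by
    apply pow_le_pow_left₀ (by positivity) h4
  have h6 : ((n:ℝ) / 2) ^ 2 * ((n:ℝ) / 6) ≤ ((n:ℝ) / 2) ^ 2 * ((T:ℝ) + 1) ^ 2 :=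
    mul_le_mul_of_nonneg_left h2 (by positivity)
  nlinarith [h5, h6]

/-- Jarník's upper bound: a strictly convex function `[0,N] → [0,N]` has
`O(N^{2/3})` integer points on its graph, with absolute constant. -/
theorem stmt_13 :
    ∃ C : ℝ, 0 < C ∧ ∀ N : ℝ, 1 ≤ N → ∀ f : ℝ → ℝ,
      StrictConvexOn ℝ (Icc 0 N) f →
      (∀ x ∈ Icc (0 : ℝ) N, f x ∈ Icc (0 : ℝ) N) →
      {p : ℤ × ℤ | (p.1 : ℝ) ∈ Icc (0 : ℝ) N ∧ f p.1 = (p.2 : ℝ)}.Finite ∧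
      ({p : ℤ × ℤ | (p.1 : ℝ) ∈ Icc (0 : ℝ) N ∧ f p.1 = (p.2 : ℝ)}.ncard : ℝ) ≤
        C * N ^ ((2 : ℝ) / 3) := by
  refine ⟨100, by norm_num, ?_⟩
  intro N hN f hconv hmap
  set S := {p : ℤ × ℤ | (p.1 : ℝ) ∈ Icc (0 : ℝ) N ∧ f p.1 = (p.2 : ℝ)} with hSdef
  set M : ℤ := ⌊N⌋ with hMdef
  have hM1 : 1 ≤ M := by
    rw [hMdef]; exact_mod_cast Int.le_floor.2 (by simpa using hN)
  have hMN : (M : ℝ) ≤ N := Int.floor_le N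
  -- finiteness
  have hsub : S ⊆ (Set.Icc (0:ℤ) M) ×ˢ (Set.Icc (0:ℤ) M) := by
    rintro ⟨a, b⟩ ⟨⟨ha0, haN⟩, hfa⟩
    have hb := hmap a ⟨ha0, haN⟩
    rw [hfa] at hb
    refine ⟨⟨by exact_mod_cast ha0, Int.le_floor.2 haN⟩,
      ⟨by exact_mod_cast hb.1, Int.le_floor.2 hb.2⟩⟩
  have hfin : S.Finite := ((Set.finite_Icc _ _).prod (Set.finite_Icc _ _)).subset hsub
  refine ⟨hfin, ?_⟩
  have hone : (1:ℝ) ≤ N ^ ((2:ℝ)/3) := by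
    calc (1:ℝ) = 1 ^ ((2:ℝ)/3) := (Real.one_rpow _).symm
    _ ≤ N ^ ((2:ℝ)/3) := Real.rpow_le_rpow zero_le_one hN (by norm_num)
  -- the set of x-coordinates
  set A : Finset ℤ := hfin.toFinset.image Prod.fst with hAdef
  have hmemS : ∀ p : ℤ × ℤ, p ∈ hfin.toFinset ↔ ((p.1:ℝ) ∈ Icc (0:ℝ) N ∧ f p.1 = (p.2:ℝ)) := by
    intro p; rw [Set.Finite.mem_toFinset]; rfl
  have hinj : Set.InjOn Prod.fst (hfin.toFinset : Set (ℤ × ℤ)) := by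
    rintro ⟨a, b⟩ hp ⟨c, d⟩ hq (h : a = c)
    rw [Finset.mem_coe, hmemS] at hp hq
    subst h
    have : (b : ℝ) = (d : ℝ) := by rw [← hp.2, ← hq.2]
    have : b = d := by exact_mod_cast this
    simp [this]
  have hcard : S.ncard = A.card := by
    rw [Set.ncard_eq_toFinset_card _ hfin, hAdef, Finset.card_image_of_injOn hinj]
  -- key property of elements of A
  have hAx : ∀ a ∈ A, ((a:ℝ) ∈ Icc (0:ℝ) N ∧ (↑(⌊f (a:ℝ)⌋) : ℝ) = f (a:ℝ)) := by
    intro a ha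
    rw [hAdef, Finset.mem_image] at ha
    obtain ⟨p, hp, hpa⟩ := ha
    rw [hmemS] at hp
    subst hpa
    refine ⟨hp.1, ?_⟩
    rw [hp.2]; simp
  by_cases hsmall : A.card ≤ 99
  · rw [hcard]
    calc (A.card : ℝ) ≤ 99 := by exact_mod_cast hsmall
    _ ≤ 100 * 1 := by norm_num
    _ ≤ 100 * N ^ ((2:ℝ)/3) := by nlinarith
  push_neg at hsmall
  obtain ⟨n, hmn⟩ : ∃ n, A.card = n + 1 := ⟨A.card - 1, by omega⟩
  have hn99 : 99 ≤ n := by omega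
  -- enumerate A in increasing order
  set E := A.orderEmbOfFin hmn with hEdef
  set X : ℕ → ℤ := fun i => E ⟨min i n, by omega⟩ with hXdef
  have hXA : ∀ i, X i ∈ A := fun i => A.orderEmbOfFin_mem hmn _
  have hXmono : ∀ i j : ℕ, i < j → j ≤ n → X i < X j := by
    intro i j hij hjn
    have : (⟨min i n, by omega⟩ : Fin (n+1)) < ⟨min j n, by omega⟩ := by
      simp only [Fin.mk_lt_mk]; omega
    exact E.strictMono this
  have hXIcc : ∀ i, ((X i : ℝ)) ∈ Icc (0:ℝ) N := fun i => (hAx _ (hXA i)).1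
  set Y : ℕ → ℤ := fun i => ⌊f ((X i : ℝ))⌋ with hYdef
  have hYf : ∀ i, ((Y i : ℝ)) = f ((X i : ℝ)) := fun i => (hAx _ (hXA i)).2
  have hY0 : ∀ i, 0 ≤ Y i ∧ Y i ≤ M := by
    intro i
    have := hmap _ (hXIcc i)
    rw [← hYf i] at this
    exact ⟨by exact_mod_cast this.1, Int.le_floor.2 (by exact_mod_cast this.2)⟩
  have hX0 : ∀ i, 0 ≤ X i ∧ X i ≤ M := by
    intro i
    have := hXIcc i
    exact ⟨by exact_mod_cast this.1, Int.le_floor.2 this.2⟩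
  set dx : ℕ → ℤ := fun i => X (i+1) - X i with hdxdef
  set dy : ℕ → ℤ := fun i => Y (i+1) - Y i with hdydef
  have hdx : ∀ i < n, 1 ≤ dx i := by
    intro i hi
    have := hXmono i (i+1) (by omega) (by omega)
    simp only [hdxdef]; omega
  -- the key slope inequality
  have hkey : ∀ i j : ℕ, i < j → j < n → dy i * dx j < dy j * dx i := by
    intro i j hij hjn
    have h1 : (X i : ℝ) < (X (i+1) : ℝ) := by exact_mod_cast hXmono i (i+1) (by omega) (by omega)
    have h2 : (X (i+1) : ℝ) ≤ (X j : ℝ) := by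
      rcases eq_or_lt_of_le (show i + 1 ≤ j by omega) with h | h
      · rw [h]
      · exact_mod_cast le_of_lt (hXmono (i+1) j h (by omega))
    have h3 : (X j : ℝ) < (X (j+1) : ℝ) := by exact_mod_cast hXmono j (j+1) (by omega) (by omega)
    have hslope : (f (X (i+1)) - f (X i)) / ((X (i+1):ℝ) - X i)
        < (f (X (j+1)) - f (X j)) / ((X (j+1):ℝ) - X j) := by
      rcases eq_or_lt_of_le h2 with h | h
      · rw [h] at h1 ⊢
        exact hconv.slope_strict_mono_adjacent (hXIcc i) (hXIcc (j+1)) h1 h3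
      · calc (f (X (i+1)) - f (X i)) / ((X (i+1):ℝ) - X i)
            < (f (X (j+1)) - f (X (i+1))) / ((X (j+1):ℝ) - X (i+1)) :=
              hconv.slope_strict_mono_adjacent (hXIcc i) (hXIcc (j+1)) h1 (h.trans h3)
        _ < (f (X (j+1)) - f (X j)) / ((X (j+1):ℝ) - X j) :=
              hconv.secant_strict_mono_aux3 (hXIcc (i+1)) (hXIcc (j+1)) h h3
    rw [div_lt_div_iff₀ (by linarith) (by linarith)] at hslope
    rw [← hYf i, ← hYf (i+1), ← hYf j, ← hYf (j+1)] at hslope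
    have : ((dy i : ℝ)) * (dx j) < (dy j) * (dx i) := by
      simp only [hdydef, hdxdef]; push_cast; nlinarith
    exact_mod_cast this
  -- distinctness of the difference vectors
  have hvinj : ∀ i < n, ∀ j < n, (dx i, dy i) = (dx j, dy j) → i = j := by
    intro i hi j hj h
    rw [Prod.mk.injEq] at h
    rcases lt_trichotomy i j with hlt | heq | hlt
    · exfalso; have := hkey i j hlt hj; rw [h.1, h.2] at this; omega
    · exact heq
    · exfalso; have := hkey j i hlt hi; rw [h.1, h.2] at this; omega
  -- sum of dx telescopes
  have hsumdx : ∑ i ∈ Finset.range n, dx i ≤ M := by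
    rw [hdxdef]
    rw [Finset.sum_range_sub X]
    have := (hX0 n).2
    have := (hX0 0).1
    omega
  -- sign structure of dy : negative then nonnegative
  have hsign : ∀ i j : ℕ, i ≤ j → j < n → dy j < 0 → dy i < 0 := by
    intro i j hij hjn hdyj
    rcases eq_or_lt_of_le hij with h | h
    · rw [h]; exact hdyj
    · have h1 := hkey i j h hjn
      have h2 := hdx i (by omega)
      have h3 := hdx j (by omega)
      nlinarith
  set P := (Finset.range n).filter (fun i => dy i < 0) with hPdef
  set k := P.card with hkdef
  have hkn : k ≤ n := by
    calc k ≤ (Finset.range n).card := Finset.card_filter_le _ _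
    _ = n := Finset.card_range n
  have hPk : ∀ i, i ∈ P ↔ i < k := by
    intro i
    constructor
    · intro hi
      rw [hPdef, Finset.mem_filter, Finset.mem_range] at hi
      have hsubP : Finset.range (i+1) ⊆ P := by
        intro j hj
        rw [Finset.mem_range] at hj
        rw [hPdef, Finset.mem_filter, Finset.mem_range]
        exact ⟨by omega, hsign j i (by omega) hi.1 hi.2⟩
      have := Finset.card_le_card hsubP
      rw [Finset.card_range] at this
      omega
    · intro hik
      by_contra hi
      have hsubP : P ⊆ Finset.range i := by
        intro j hj
        rw [hPdef, Finset.mem_filter, Finset.mem_range] at hj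
        rw [Finset.mem_range]
        by_contra hji
        exact hi (by
          rw [hPdef, Finset.mem_filter, Finset.mem_range]
          exact ⟨by omega, hsign i j (by omega) hj.1 hj.2⟩)
      have := Finset.card_le_card hsubP
      rw [Finset.card_range] at this
      omega
  -- sum of |dy| is at most 2M
  have hsumdy : ∑ i ∈ Finset.range n, |dy i| ≤ 2 * M := by
    have hsplit : ∑ i ∈ Finset.range n, |dy i|
        = ∑ i ∈ Finset.range k, |dy i| + ∑ i ∈ Finset.Ico k n, |dy i| := by
      rw [Finset.range_eq_Ico, ← Finset.sum_Ico_consecutive _ (Nat.zero_le k) hkn, Finset.range_eq_Ico]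
    have h1 : ∑ i ∈ Finset.range k, |dy i| = Y 0 - Y k := by
      have : ∀ i ∈ Finset.range k, |dy i| = (fun t => -Y t) (i+1) - (fun t => -Y t) i := by
        intro i hi
        rw [Finset.mem_range] at hi
        have : dy i < 0 := by
          have := (hPk i).2 hi
          rw [hPdef, Finset.mem_filter] at this
          exact this.2
        simp only [hdydef] at this ⊢
        rw [abs_of_neg this]; ring
      rw [Finset.sum_congr rfl this, Finset.sum_range_sub (fun t => -Y t)]
      ring
    have h2 : ∑ i ∈ Finset.Ico k n, |dy i| = Y n - Y k := by
      have : ∀ i ∈ Finset.Ico k n, |dy i| = Y (i+1) - Y i := by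
        intro i hi
        rw [Finset.mem_Ico] at hi
        have hnotP : i ∉ P := fun h => by have := (hPk i).1 h; omega
        have : ¬ dy i < 0 := fun h => hnotP (by
          rw [hPdef, Finset.mem_filter, Finset.mem_range]; exact ⟨hi.2, h⟩)
        simp only [hdydef] at this ⊢
        rw [abs_of_nonneg (by omega)]
      rw [Finset.sum_congr rfl this, Finset.sum_Ico_eq_sub _ hkn,
        Finset.sum_range_sub Y, Finset.sum_range_sub Y]
      ring
    rw [hsplit, h1, h2]
    have := (hY0 0).2
    have := (hY0 n).2
    have := (hY0 k).1
    omega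
  -- total size bound
  have htot : ∑ i ∈ Finset.range n, (dx i + |dy i|) ≤ 3 * M := by
    rw [Finset.sum_add_distrib]
    omega
  -- apply the counting lemma
  have hmain := jarnik_count n M hn99 (fun i => (dx i, dy i)) hvinj hdx htot
  -- final numeric computation
  have hMpos : (0:ℝ) < M := by exact_mod_cast hM1
  have hn3 : ((n:ℝ)) ^ (3:ℕ) ≤ 225 * N ^ (2:ℕ) := by
    calc ((n:ℝ)) ^ (3:ℕ) ≤ 225 * (M:ℝ) ^ (2:ℕ) := hmain
    _ ≤ 225 * N ^ (2:ℕ) := by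
        have : ((M:ℝ)) ^ (2:ℕ) ≤ N ^ (2:ℕ) := by
          apply pow_le_pow_left₀ (le_of_lt hMpos) hMN
        linarith
  have hNr : (N ^ ((2:ℝ)/3)) ^ (3:ℕ) = N ^ (2:ℕ) := by
    rw [← Real.rpow_natCast (N ^ ((2:ℝ)/3)) 3, ← Real.rpow_mul (by linarith)]
    norm_num
  have hn7 : (n:ℝ) ≤ 7 * N ^ ((2:ℝ)/3) := by
    rw [← pow_le_pow_iff_left₀ (by positivity) (by positivity) (three_ne_zero)]
    calc ((n:ℝ)) ^ (3:ℕ) ≤ 225 * N ^ (2:ℕ) := hn3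
    _ ≤ 343 * N ^ (2:ℕ) := by nlinarith
    _ = (7 * N ^ ((2:ℝ)/3)) ^ (3:ℕ) := by rw [mul_pow, hNr]; norm_num
  rw [hcard, hmn]
  push_cast
  nlinarith
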